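/- Let f : ℝ → ℝ be a C^r diffeomorphism (r ≥ 2) with |f'(x)| > μ for all x, where 0 < μ < 1, and with ‖f''‖_{C^{r-2}} finite. Then there exists a constant C = C(r) ≥ 1 such that ‖(f⁻¹)'‖_{C^{r-1}} < C·μ^{1-2r}·max(1, ‖f''‖_{C^{r-2}})^{r-1}. -/

import Mathlib

open Finset

namespace Stmt9Aux

lemma mul_bound {A B : ℝ → ℝ} {n : ℕ} (hA : ContDiff ℝ (n : ℕ∞) A)
    (hB : ContDiff ℝ (n : ℕ∞) B) {T : ℝ} (x : ℝ)
    (h : ∀ i ≤ n, |iteratedDeriv i A x| * |iteratedDeriv (n - i) B x| ≤ T) :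
    |iteratedDeriv n (fun y => A y * B y) x| ≤ 2 ^ n * T := by
  have hb := norm_iteratedFDeriv_mul_le (𝕜 := ℝ) hA hB x
      (n := n) (by exact_mod_cast le_rfl)
  rw [norm_iteratedFDeriv_eq_norm_iteratedDeriv, Real.norm_eq_abs] at hb
  refine hb.trans ?_
  have : ∀ i ∈ range (n + 1),
      (n.choose i : ℝ) * ‖iteratedFDeriv ℝ i A x‖ * ‖iteratedFDeriv ℝ (n - i) B x‖ ≤
        (n.choose i : ℝ) * T := by
    intro i hi
    rw [norm_iteratedFDeriv_eq_norm_iteratedDeriv, norm_iteratedFDeriv_eq_norm_iteratedDeriv,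
      Real.norm_eq_abs, Real.norm_eq_abs, mul_assoc]
    have hc : (0:ℝ) ≤ (n.choose i : ℝ) := by positivity
    exact mul_le_mul_of_nonneg_left (h i (Nat.lt_succ_iff.mp (mem_range.mp hi))) hc
  refine (Finset.sum_le_sum this).trans ?_
  rw [← Finset.sum_mul]
  have : (∑ i ∈ range (n + 1), (n.choose i : ℝ)) = 2 ^ n := by
    rw [← Nat.cast_sum]
    norm_cast
    exact Nat.sum_range_choose n
  rw [this]

lemma contDiff_deriv {f : ℝ → ℝ} {r : ℕ} (hf : ContDiff ℝ (r : ℕ∞) f) (hr : 1 ≤ r) :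
    ContDiff ℝ ((r - 1 : ℕ) : ℕ∞) (deriv f) := by
  obtain ⟨s, rfl⟩ : ∃ s, r = s + 1 := ⟨r - 1, by omega⟩
  have h : ContDiff ℝ ((s : WithTop ℕ∞) + 1) f := by exact_mod_cast hf
  have := (contDiff_succ_iff_deriv.1 h).2.2
  simpa using this

def Hyp (r : ℕ) (f : ℝ → ℝ) (μ K : ℝ) : Prop :=
  0 < μ ∧ μ < 1 ∧ 0 ≤ K ∧ ContDiff ℝ (r : ℕ∞) f ∧ (∀ x, μ < |deriv f x|) ∧
  ∀ k, 2 ≤ k → k ≤ r → ∀ x, |iteratedDeriv k f x| ≤ K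

noncomputable def psi (f : ℝ → ℝ) : ℝ → ℝ := fun x => (deriv f x)⁻¹

noncomputable def phi (f : ℝ → ℝ) : ℕ → ℝ → ℝ
  | 0 => psi f
  | (j+1) => fun x => deriv (phi f j) x * psi f x

section facts

variable {r : ℕ} {f : ℝ → ℝ} {μ K : ℝ} (h : Hyp r f μ K) (hr : 2 ≤ r)

include h

lemma deriv_ne (x : ℝ) : deriv f x ≠ 0 := by
  have h1 := h.2.2.2.2.1 x
  have := h.1
  intro hc
  rw [hc] at h1
  simp at h1
  linarith

include hr

lemma deriv_contDiff : ContDiff ℝ ((r - 1 : ℕ) : ℕ∞) (deriv f) :=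
  contDiff_deriv h.2.2.2.1 (by omega)

lemma psi_contDiff : ContDiff ℝ ((r - 1 : ℕ) : ℕ∞) (psi f) :=
  (deriv_contDiff h hr).inv (deriv_ne h)

lemma deriv_psi : deriv (psi f) =
    fun x => (-(deriv (deriv f) x)) * (psi f x * psi f x) := by
  funext x
  have hdf : Differentiable ℝ (deriv f) := by
    have := deriv_contDiff h hr
    exact this.differentiable (by exact_mod_cast (by omega : r - 1 ≠ 0))
  have h1 : HasDerivAt (deriv f) (deriv (deriv f) x) x := (hdf x).hasDerivAt
  have h2 := h1.inv (deriv_ne h x)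
  rw [show (deriv f)⁻¹ = psi f from rfl] at h2
  rw [h2.deriv]
  simp only [psi, div_eq_mul_inv, sq, mul_inv]

end facts
lemma S1 (r : ℕ) (hr : 2 ≤ r) :
    ∀ m, m + 1 ≤ r → ∃ p : ℝ, 1 ≤ p ∧ ∀ f μ K, Hyp r f μ K → ∀ i ≤ m, ∀ x,
      |iteratedDeriv i (psi f) x| ≤ p * μ⁻¹ ^ (i + 1) * max 1 K ^ i := by
  intro m
  induction m with
  | zero =>
    intro _
    refine ⟨1, le_rfl, ?_⟩
    rintro f μ K h i hi x
    obtain rfl : i = 0 := by omega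
    have := inv_anti₀ h.1 (le_of_lt (h.2.2.2.2.1 x))
    simpa [psi, abs_inv, iteratedDeriv_zero] using this
  | succ m IH =>
    intro hm2
    obtain ⟨p, hp1, hp⟩ := IH (by omega)
    have h4 : (0:ℝ) ≤ 4 ^ m * p ^ 2 := by positivity
    refine ⟨4 ^ m * p ^ 2 + p, by linarith, ?_⟩
    intro f μ K h i hi x
    have hμ0 := h.1
    have hν1 : (1:ℝ) ≤ μ⁻¹ := (one_le_inv₀ h.1).2 h.2.1.le
    have hν0 : (0:ℝ) ≤ μ⁻¹ := by positivity
    have hM1 : (1:ℝ) ≤ max 1 K := le_max_left _ _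
    have hM0 : (0:ℝ) ≤ max 1 K := by linarith
    rcases Nat.lt_or_ge i (m + 1) with hile | hieq
    · refine (hp f μ K h i (by omega) x).trans ?_
      have hpp : p ≤ 4 ^ m * p ^ 2 + p := by linarith
      gcongr
    · have hi' : i = m + 1 := by omega
      subst hi'
      rw [iteratedDeriv_succ', deriv_psi h hr]
      have hfd2 : ContDiff ℝ ((r - 2 : ℕ) : ℕ∞) (deriv (deriv f)) := by
        have h2 := contDiff_deriv (deriv_contDiff h hr) (by omega)
        have : r - 1 - 1 = r - 2 := by omega
        rwa [this] at h2
      have hA : ContDiff ℝ ((m : ℕ) : ℕ∞) (fun y => -(deriv (deriv f) y)) := by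
        refine ContDiff.neg (hfd2.of_le ?_)
        exact_mod_cast (by omega : m ≤ r - 2)
      have hψ := psi_contDiff h hr
      have hψm : ∀ n : ℕ, n ≤ r - 1 → ContDiff ℝ ((n : ℕ) : ℕ∞) (psi f) := fun n hn =>
        hψ.of_le (by exact_mod_cast hn)
      have hBbound : ∀ j ≤ m, ∀ y : ℝ, |iteratedDeriv j (fun y => psi f y * psi f y) y| ≤
          2 ^ j * (p ^ 2 * μ⁻¹ ^ (j + 2) * max 1 K ^ j) := by
        intro j hj y
        refine mul_bound (hψm j (by omega)) (hψm j (by omega)) y ?_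
        intro l hl
        obtain ⟨d, rfl⟩ : ∃ d, j = l + d := ⟨j - l, by omega⟩
        rw [show l + d - l = d from by omega]
        calc |iteratedDeriv l (psi f) y| * |iteratedDeriv d (psi f) y|
            ≤ (p * μ⁻¹ ^ (l + 1) * max 1 K ^ l) * (p * μ⁻¹ ^ (d + 1) * max 1 K ^ d) :=
              mul_le_mul (hp f μ K h l (by omega) y) (hp f μ K h d (by omega) y)
                (abs_nonneg _) (by positivity)
          _ = p ^ 2 * μ⁻¹ ^ (l + d + 2) * max 1 K ^ (l + d) := by ring
      have hB : ContDiff ℝ ((m : ℕ) : ℕ∞) (fun y => psi f y * psi f y) :=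
        (hψm m (by omega)).mul (hψm m (by omega))
      have hterm : ∀ i ≤ m, |iteratedDeriv i (fun y => -(deriv (deriv f) y)) x| *
          |iteratedDeriv (m - i) (fun y => psi f y * psi f y) x| ≤
          max 1 K * (2 ^ m * (p ^ 2 * μ⁻¹ ^ (m + 2) * max 1 K ^ m)) := by
        intro i hi
        have hAd : |iteratedDeriv i (fun y => -(deriv (deriv f) y)) x| ≤ max 1 K := by
          rw [show (fun y => -(deriv (deriv f) y)) = -(deriv (deriv f)) from rfl, iteratedDeriv_neg, abs_neg, ← iteratedDeriv_succ', ← iteratedDeriv_succ']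
          exact (h.2.2.2.2.2 (i + 1 + 1) (by omega) (by omega) x).trans (le_max_right _ _)
        calc |iteratedDeriv i (fun y => -(deriv (deriv f) y)) x| *
              |iteratedDeriv (m - i) (fun y => psi f y * psi f y) x|
            ≤ max 1 K * (2 ^ (m - i) * (p ^ 2 * μ⁻¹ ^ ((m - i) + 2) * max 1 K ^ (m - i))) :=
              mul_le_mul hAd (hBbound (m - i) (by omega) x) (abs_nonneg _) hM0
          _ ≤ max 1 K * (2 ^ m * (p ^ 2 * μ⁻¹ ^ (m + 2) * max 1 K ^ m)) := by
              gcongr <;> first | exact one_le_two | omega | exact hν1 | exact hM1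
      have key := mul_bound hA hB x hterm
      refine key.trans ?_
      have heq : (2:ℝ) ^ m * (max 1 K * (2 ^ m * (p ^ 2 * μ⁻¹ ^ (m + 2) * max 1 K ^ m)))
          = (4 ^ m * p ^ 2) * μ⁻¹ ^ (m + 1 + 1) * max 1 K ^ (m + 1) := by
        rw [show (4:ℝ) ^ m = 2 ^ m * 2 ^ m from by rw [← mul_pow]; norm_num]
        ring
      rw [heq]
      gcongr
      have h4 : (0:ℝ) ≤ p := by linarith
      linarith

lemma phi_contDiff {r : ℕ} {f : ℝ → ℝ} {μ K : ℝ} (h : Hyp r f μ K) (hr : 2 ≤ r) :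
    ∀ j, j + 1 ≤ r → ContDiff ℝ ((r - 1 - j : ℕ) : ℕ∞) (phi f j) := by
  intro j
  induction j with
  | zero =>
    intro _
    rw [show phi f 0 = psi f from rfl, show r - 1 - 0 = r - 1 from by omega]
    exact psi_contDiff h hr
  | succ j IH =>
    intro hj
    have h1 := IH (by omega)
    have h2 := contDiff_deriv h1 (by omega)
    rw [show r - 1 - j - 1 = r - 1 - (j + 1) from by omega] at h2
    rw [show phi f (j + 1) = fun x => deriv (phi f j) x * psi f x from rfl]
    exact h2.mul ((psi_contDiff h hr).of_le (by exact_mod_cast (by omega : r - 1 - (j+1) ≤ r - 1)))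

lemma S2 (r : ℕ) (hr : 2 ≤ r) : ∀ J, J + 1 ≤ r → ∃ q : ℝ, 1 ≤ q ∧
    ∀ f μ K, Hyp r f μ K → ∀ j ≤ J, ∀ m, m ≤ r - 1 - j → ∀ x,
      |iteratedDeriv m (phi f j) x| ≤ q * μ⁻¹ ^ (2*j + 1 + m) * max 1 K ^ (j + m) := by
  intro J
  induction J with
  | zero =>
    intro _
    obtain ⟨p, hp1, hp⟩ := S1 r hr (r - 1) (by omega)
    refine ⟨p, hp1, ?_⟩
    intro f μ K h j hj m hm x
    obtain rfl : j = 0 := by omega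
    have := hp f μ K h m (by omega) x
    rw [show 2*0+1+m = m+1 from by omega, show 0+m = m from by omega,
      show phi f 0 = psi f from rfl]
    exact this
  | succ J IH =>
    intro hJ
    obtain ⟨q, hq1, hq⟩ := IH (by omega)
    obtain ⟨p, hp1, hp⟩ := S1 r hr (r - 1) (by omega)
    have hq'0 : (0:ℝ) ≤ 2 ^ r * q * p :=
      mul_nonneg (mul_nonneg (by positivity) (by linarith)) (by linarith)
    refine ⟨2 ^ r * q * p + q, by linarith, ?_⟩
    intro f μ K h j hj m hm x
    have hμ0 := h.1
    have hν1 : (1:ℝ) ≤ μ⁻¹ := one_le_inv₀ h.1 |>.2 h.2.1.le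
    have hν0 : (0:ℝ) ≤ μ⁻¹ := by positivity
    have hM1 : (1:ℝ) ≤ max 1 K := le_max_left _ _
    have hM0 : (0:ℝ) ≤ max 1 K := by linarith
    rcases Nat.lt_or_ge j (J + 1) with hjle | hjeq
    · refine (hq f μ K h j (by omega) m hm x).trans ?_
      exact mul_le_mul_of_nonneg_right (mul_le_mul_of_nonneg_right (by linarith)
        (pow_nonneg hν0 _)) (pow_nonneg hM0 _)
    · have hj' : j = J + 1 := by omega
      subst hj'
      have hm' : m ≤ r - 2 - J := by omega
      have hφ := phi_contDiff h hr J (by omega)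
      have hA : ContDiff ℝ ((m : ℕ) : ℕ∞) (deriv (phi f J)) := by
        have := contDiff_deriv hφ (by omega)
        exact this.of_le (by exact_mod_cast (by omega : m ≤ r - 1 - J - 1))
      have hB : ContDiff ℝ ((m : ℕ) : ℕ∞) (psi f) :=
        (psi_contDiff h hr).of_le (by exact_mod_cast (by omega : m ≤ r - 1))
      have hterm : ∀ i ≤ m, |iteratedDeriv i (deriv (phi f J)) x| *
          |iteratedDeriv (m - i) (psi f) x| ≤
          q * p * μ⁻¹ ^ (2*(J+1) + 1 + m) * max 1 K ^ ((J+1) + m) := by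
        intro i hi
        obtain ⟨d, rfl⟩ : ∃ d, m = i + d := ⟨m - i, by omega⟩
        rw [show i + d - i = d from by omega]
        have h1 : |iteratedDeriv i (deriv (phi f J)) x| ≤
            q * μ⁻¹ ^ (2*J + 1 + (i+1)) * max 1 K ^ (J + (i+1)) := by
          rw [← iteratedDeriv_succ']
          exact hq f μ K h J le_rfl (i + 1) (by omega) x
        have h2 := hp f μ K h d (by omega) x
        calc |iteratedDeriv i (deriv (phi f J)) x| * |iteratedDeriv d (psi f) x|
            ≤ (q * μ⁻¹ ^ (2*J + 1 + (i+1)) * max 1 K ^ (J + (i+1))) *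
              (p * μ⁻¹ ^ (d + 1) * max 1 K ^ d) :=
              mul_le_mul h1 h2 (abs_nonneg _) (by positivity)
          _ = q * p * μ⁻¹ ^ (2*(J+1) + 1 + (i+d)) * max 1 K ^ ((J+1) + (i+d)) := by ring
      have key := mul_bound hA hB x hterm
      rw [show phi f (J + 1) = fun y => deriv (phi f J) y * psi f y from rfl]
      refine key.trans ?_
      have h2m : (2:ℝ) ^ m ≤ 2 ^ r := by
        have hmr : m ≤ r := by omega
        exact pow_le_pow_right₀ one_le_two hmr
      have e2 : (2:ℝ)^m * (q * p) ≤ 2^r * q * p + q := by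
        nlinarith [mul_le_mul_of_nonneg_right h2m
          (mul_nonneg (le_trans zero_le_one hq1) (le_trans zero_le_one hp1))]
      calc (2:ℝ) ^ m * (q * p * μ⁻¹ ^ (2*(J+1) + 1 + m) * max 1 K ^ ((J+1) + m))
          = (2^m * (q * p)) * μ⁻¹ ^ (2*(J+1) + 1 + m) * max 1 K ^ ((J+1) + m) := by ring
        _ ≤ (2^r * q * p + q) * μ⁻¹ ^ (2*(J+1) + 1 + m) * max 1 K ^ ((J+1) + m) :=
            mul_le_mul_of_nonneg_right (mul_le_mul_of_nonneg_right e2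
              (pow_nonneg hν0 _)) (pow_nonneg hM0 _)

lemma cont_g {f g : ℝ → ℝ} (hf : Continuous f) (hgf : ∀ x, g (f x) = x)
    (hfg : ∀ x, f (g x) = x) : Continuous g := by
  have hinj : Function.Injective f := fun a b hab => by
    have := congrArg g hab; rwa [hgf, hgf] at this
  rcases hf.strictMono_of_inj hinj with hmono | hanti
  · have hsurj : Function.Surjective f := fun y => ⟨g y, hfg y⟩
    let e := StrictMono.orderIsoOfSurjective f hmono hsurj
    have hge : g = ⇑e.symm := by
      funext y
      apply hinj
      rw [hfg]
      exact (StrictMono.orderIsoOfSurjective_self_symm_apply f hmono hsurj y).symm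
    rw [hge]
    exact OrderIso.continuous e.symm
  · have hmono : StrictMono (fun x : ℝ => f (-x)) := fun a b hab => hanti (neg_lt_neg hab)
    have hsurj : Function.Surjective (fun x : ℝ => f (-x)) := fun y => ⟨-(g y), by
      simpa using hfg y⟩
    let e := StrictMono.orderIsoOfSurjective _ hmono hsurj
    have hge : g = fun y => -(e.symm y) := by
      funext y
      have h1 : (fun x : ℝ => f (-x)) (-(g y)) = y := by simpa using hfg y
      have h2 : (fun x : ℝ => f (-x)) (e.symm y) = y :=
        StrictMono.orderIsoOfSurjective_self_symm_apply _ hmono hsurj y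
      have h3 : -(g y) = e.symm y := hmono.injective (h1.trans h2.symm)
      linarith [h3]
    rw [hge]
    exact (OrderIso.continuous e.symm).neg

lemma iter_g {r : ℕ} {f : ℝ → ℝ} {μ K : ℝ} (h : Hyp r f μ K) (hr : 2 ≤ r) {g : ℝ → ℝ}
    (hg : ∀ x, HasDerivAt g ((deriv f (g x))⁻¹) x) :
    ∀ k, k + 1 ≤ r → iteratedDeriv (k + 1) g = fun x => phi f k (g x) := by
  intro k
  induction k with
  | zero =>
    intro _
    rw [iteratedDeriv_one]
    funext x
    exact (hg x).deriv
  | succ k IH =>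
    intro hk
    rw [iteratedDeriv_succ, IH (by omega)]
    funext x
    have hφ : ContDiff ℝ ((r - 1 - k : ℕ) : ℕ∞) (phi f k) := phi_contDiff h hr k (by omega)
    have hφd : HasDerivAt (phi f k) (deriv (phi f k) (g x)) (g x) := by
      have hd : Differentiable ℝ (phi f k) :=
        hφ.differentiable (by exact_mod_cast (by omega : r - 1 - k ≠ 0))
      exact (hd (g x)).hasDerivAt
    have hcomp := HasDerivAt.comp x hφd (hg x)
    have hder : deriv (fun y => phi f k (g y)) x =
        deriv (phi f k) (g x) * (deriv f (g x))⁻¹ := hcomp.deriv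
    rw [hder]
    rfl

end Stmt9Aux

/-- Inverse lemma: for a `C^r` diffeomorphism `f` of `ℝ` with `|f'| > μ`
(`0 < μ < 1`) and derivatives of order `2..r` bounded by `K`, the derivatives of the inverse
`g = f⁻¹` of order `1..r` are bounded by `C · μ^{1-2r} · max(1,K)^{r-1}` with `C = C(r) ≥ 1`. -/
theorem stmt_9 (r : ℕ) (hr : 2 ≤ r) :
    ∃ C : ℝ, 1 ≤ C ∧ ∀ (f g : ℝ → ℝ) (μ K : ℝ), 0 < μ → μ < 1 → 0 ≤ K →
      ContDiff ℝ (r : ℕ∞) f →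
      (∀ x, g (f x) = x) → (∀ x, f (g x) = x) →
      (∀ x, μ < |deriv f x|) →
      (∀ k, 2 ≤ k → k ≤ r → ∀ x, |iteratedDeriv k f x| ≤ K) →
      ∀ k, 1 ≤ k → k ≤ r → ∀ x,
        |iteratedDeriv k g x| < C * μ ^ ((1:ℤ) - 2 * r) * max 1 K ^ (r - 1) := by
  obtain ⟨q, hq1, hq⟩ := Stmt9Aux.S2 r hr (r - 1) (by omega)
  refine ⟨q + 1, by linarith, ?_⟩
  intro f g μ K hμ hμ1 hK hcd hgf hfg hlt hbd k hk1 hkr x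
  have h : Stmt9Aux.Hyp r f μ K := ⟨hμ, hμ1, hK, hcd, hlt, hbd⟩
  have hcg : Continuous g := Stmt9Aux.cont_g hcd.continuous hgf hfg
  have hdf : Differentiable ℝ f := hcd.differentiable (by exact_mod_cast (by omega : r ≠ 0))
  have hg : ∀ y, HasDerivAt g ((deriv f (g y))⁻¹) y := fun y =>
    HasDerivAt.of_local_left_inverse hcg.continuousAt (hdf (g y)).hasDerivAt
      (Stmt9Aux.deriv_ne h (g y)) (Filter.Eventually.of_forall hfg)
  obtain ⟨k', rfl⟩ : ∃ k', k = k' + 1 := ⟨k - 1, by omega⟩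
  have hiter := Stmt9Aux.iter_g h hr hg k' (by omega)
  rw [hiter]
  show |Stmt9Aux.phi f k' (g x)| < _
  have hb := hq f μ K h k' (by omega) 0 (by omega) (g x)
  rw [iteratedDeriv_zero] at hb
  have hν1 : (1:ℝ) ≤ μ⁻¹ := (one_le_inv₀ hμ).2 hμ1.le
  have hν0 : (0:ℝ) ≤ μ⁻¹ := by positivity
  have hM1 : (1:ℝ) ≤ max 1 K := le_max_left _ _
  have hq0 : (0:ℝ) ≤ q := by linarith
  have step1 : |Stmt9Aux.phi f k' (g x)| ≤ q * μ⁻¹ ^ (2*r - 1) * max 1 K ^ (r - 1) := by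
    refine hb.trans ?_
    gcongr <;> first | omega | exact hν1 | exact hM1
  have hpos : (0:ℝ) < μ⁻¹ ^ (2*r - 1) * max 1 K ^ (r - 1) := by positivity
  have step2 : q * μ⁻¹ ^ (2*r - 1) * max 1 K ^ (r - 1) <
      (q + 1) * (μ⁻¹ ^ (2*r - 1) * max 1 K ^ (r - 1)) := by nlinarith
  have hz : μ ^ ((1:ℤ) - 2 * r) = μ⁻¹ ^ (2*r - 1) := by
    have he : ((1:ℤ) - 2 * r) = -((2*r - 1 : ℕ) : ℤ) := by omega
    rw [he, zpow_neg, zpow_natCast, inv_pow]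
  rw [hz, mul_assoc]
  exact lt_of_le_of_lt step1 step2
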